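/- arXiv:1805.07502 — 5 statements merged into one kernel-verified Lean document; each statement's English description precedes it below -/
import Mathlib

section
/- Let σ : ℝ → ℝ be a bounded, Borel-measurable sigmoidal function and let μ be a finite signed Borel measure on ℝ^d such that ∫_{ℝ^d} σ(wᵀx + θ) dμ(x) = 0 for all w ∈ ℝ^d and θ ∈ ℝ. Then for every w ∈ ℝ^d, w₀ ∈ ℝ and φ ∈ ℝ, one has σ(φ)·μ({x ∈ ℝ^d : wᵀx + w₀ = 0}) + μ({x ∈ ℝ^d : wᵀx + w₀ > 0}) = 0. -/
open MeasureTheory Filter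

/-- The integral of a function against a finite signed measure, defined via its
Jordan decomposition. -/
noncomputable def signedIntegral {α : Type*} [MeasurableSpace α]
    (μ : SignedMeasure α) (f : α → ℝ) : ℝ :=
  (∫ x, f x ∂μ.toJordanDecomposition.posPart) -
    (∫ x, f x ∂μ.toJordanDecomposition.negPart)

/-- If `σ` is a bounded measurable sigmoidal function and `μ` is a finite signed
Borel measure on `ℝ^d` such that `∫ σ(wᵀx + θ) dμ(x) = 0` for all `w, θ`, then for
every `w ∈ ℝ^d`, `w₀ ∈ ℝ` and `φ ∈ ℝ`,
`σ(φ) · μ(Π_{w,w₀}) + μ(H_{w,w₀}) = 0`, where `Π_{w,w₀}` is the hyperplane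
`{x : wᵀx + w₀ = 0}` and `H_{w,w₀}` the open half-space `{x : wᵀx + w₀ > 0}`. -/
theorem sigmoidal_measure_hyperplane_halfspace
    (σ : ℝ → ℝ)
    (hbdd : ∃ B : ℝ, ∀ t : ℝ, |σ t| ≤ B)
    (hmeas : Measurable σ)
    (hsig : Tendsto σ atTop (nhds 1) ∧ Tendsto σ atBot (nhds 0))
    (d : ℕ)
    (μ : SignedMeasure (Fin d → ℝ))
    (h : ∀ (w : Fin d → ℝ) (θ : ℝ),
      signedIntegral μ (fun x => σ ((∑ j, w j * x j) + θ)) = 0) :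
    ∀ (w : Fin d → ℝ) (w₀ φ : ℝ),
      σ φ * μ {x : Fin d → ℝ | (∑ j, w j * x j) + w₀ = 0} +
        μ {x : Fin d → ℝ | (∑ j, w j * x j) + w₀ > 0} = 0 := by
  intro w w₀ φ
  obtain ⟨B, hB⟩ := hbdd
  set g : (Fin d → ℝ) → ℝ := fun x => (∑ j, w j * x j) + w₀ with hg
  have hgmeas : Measurable g := by
    apply Measurable.add_const
    exact Finset.measurable_sum _ fun j _ => by fun_prop
  set Pl : Set (Fin d → ℝ) := {x | g x = 0} with hPl
  set H : Set (Fin d → ℝ) := {x | g x > 0} with hH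
  have hPlm : MeasurableSet Pl := hgmeas (measurableSet_singleton 0)
  have hHm : MeasurableSet H := measurableSet_lt measurable_const hgmeas
  -- sequence of functions
  set f : ℕ → (Fin d → ℝ) → ℝ := fun n x => σ ((n : ℝ) * g x + φ) with hf
  -- limit function
  set F : (Fin d → ℝ) → ℝ :=
    fun x => H.indicator (fun _ => (1 : ℝ)) x + Pl.indicator (fun _ => σ φ) x with hF
  have hlim : ∀ x, Tendsto (fun n : ℕ => f n x) atTop (nhds (F x)) := by
    intro x
    rcases lt_trichotomy (g x) 0 with hx | hx | hx
    · have h1 : Tendsto (fun n : ℕ => (n : ℝ) * g x + φ) atTop atBot :=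
        tendsto_atBot_add_const_right _ _
          (tendsto_natCast_atTop_atTop.atTop_mul_const_of_neg hx)
      have : F x = 0 := by
        simp [hF, Set.indicator_of_notMem, hH, hPl, not_lt.2 hx.le, hx.ne]
      rw [this]
      exact hsig.2.comp h1
    · have : F x = σ φ := by
        simp [hF, hH, hPl, Set.indicator_of_notMem, hx]
      rw [this]
      simp only [hf, hx, mul_zero, zero_add]
      exact tendsto_const_nhds
    · have h1 : Tendsto (fun n : ℕ => (n : ℝ) * g x + φ) atTop atTop :=
        tendsto_atTop_add_const_right _ _
          (tendsto_natCast_atTop_atTop.atTop_mul_const hx)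
      have : F x = 1 := by
        simp [hF, hH, hPl, Set.indicator_of_mem, Set.indicator_of_notMem, hx, hx.ne']
      rw [this]
      exact hsig.1.comp h1
  have hfmeas : ∀ n : ℕ, Measurable (f n) :=
    fun n => hmeas.comp ((hgmeas.const_mul _).add_const _)
  -- dominated convergence for an arbitrary finite measure
  have key : ∀ (ν : Measure (Fin d → ℝ)) [IsFiniteMeasure ν],
      Tendsto (fun n : ℕ => ∫ x, f n x ∂ν) atTop (nhds (∫ x, F x ∂ν)) := by
    intro ν _
    refine tendsto_integral_of_dominated_convergence (fun _ => B)
      (fun n => (hfmeas n).aestronglyMeasurable) (integrable_const B)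
      (fun n => Filter.Eventually.of_forall fun x => hB _)
      (Filter.Eventually.of_forall hlim)
  have hFint : ∀ (ν : Measure (Fin d → ℝ)) [IsFiniteMeasure ν],
      ∫ x, F x ∂ν = (ν H).toReal + σ φ * (ν Pl).toReal := by
    intro ν _
    rw [hF, integral_add ((integrable_const (1:ℝ)).indicator hHm)
        ((integrable_const (σ φ)).indicator hPlm),
      integral_indicator_const _ hHm, integral_indicator_const _ hPlm]
    simp [mul_comm, measureReal_def]
  set νp := μ.toJordanDecomposition.posPart
  set νn := μ.toJordanDecomposition.negPart
  have hzero : ∀ n : ℕ, (∫ x, f n x ∂νp) - (∫ x, f n x ∂νn) = 0 := by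
    intro n
    have := h (fun j => (n : ℝ) * w j) ((n : ℝ) * w₀ + φ)
    have heq : (fun x => σ ((∑ j, ((n : ℝ) * w j) * x j) + ((n : ℝ) * w₀ + φ))) = f n := by
      funext x
      congr 1
      simp only [hf, hg, mul_add, Finset.mul_sum, mul_assoc]
      ring
    rw [signedIntegral, heq] at this
    exact this
  have hlim0 : Tendsto (fun n : ℕ => (∫ x, f n x ∂νp) - (∫ x, f n x ∂νn)) atTop
      (nhds ((∫ x, F x ∂νp) - (∫ x, F x ∂νn))) := (key νp).sub (key νn)
  have hFzero : (∫ x, F x ∂νp) - (∫ x, F x ∂νn) = 0 := by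
    have : Tendsto (fun _ : ℕ => (0:ℝ)) atTop
        (nhds ((∫ x, F x ∂νp) - (∫ x, F x ∂νn))) := by
      simpa [hzero] using hlim0
    exact (tendsto_nhds_unique tendsto_const_nhds this).symm
  rw [hFint νp, hFint νn] at hFzero
  have happ : ∀ s : Set (Fin d → ℝ), MeasurableSet s →
      μ s = (νp s).toReal - (νn s).toReal := by
    intro s hs
    conv_lhs => rw [← μ.toSignedMeasure_toJordanDecomposition]
    rw [JordanDecomposition.toSignedMeasure, VectorMeasure.sub_apply,
      Measure.toSignedMeasure_apply_measurable hs, Measure.toSignedMeasure_apply_measurable hs]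
    rfl
  rw [happ Pl hPlm, happ H hHm]
  linarith [hFzero]
end

section
/- For every d ≥ 1 and every x ∈ ℝ^d, Σ_{S ⊆ {1,…,d}} (−1)^{|S|} · (Σ_{j=1}^d s_j(S)·x_j)^d = 2^d · d! · Π_{j=1}^d x_j, where the sum ranges over all 2^d subsets S of {1,…,d}. -/
open Finset Function

lemma key_sum (d : ℕ) (f : Fin d → Fin d) :
    ∑ S : Finset (Fin d),
      (-1 : ℝ) ^ S.card * ∏ i, (if f i ∈ S then (-1 : ℝ) else 1)
      = if Function.Bijective f then (2 : ℝ) ^ d else 0 := by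
  set c : Fin d → ℕ := fun j => (univ.filter (fun i => f i = j)).card with hc
  have h1 : ∀ S : Finset (Fin d),
      (-1 : ℝ) ^ S.card * ∏ i, (if f i ∈ S then (-1 : ℝ) else 1)
      = ∏ j, (if j ∈ S then (-1 : ℝ) else 1) ^ (1 + c j) := by
    intro S
    have hp : (-1 : ℝ) ^ S.card = ∏ j, (if j ∈ S then (-1 : ℝ) else 1) := by
      rw [Finset.prod_ite_mem, univ_inter, Finset.prod_const]
    have hf : (∏ i, (if f i ∈ S then (-1 : ℝ) else 1))
        = ∏ j, (if j ∈ S then (-1 : ℝ) else 1) ^ c j := by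
      rw [← Finset.prod_fiberwise_of_maps_to (t := univ) (fun i _ => mem_univ (f i))
        (fun i => (if f i ∈ S then (-1 : ℝ) else 1))]
      refine Finset.prod_congr rfl fun j _ => ?_
      rw [← Finset.prod_const]
      refine Finset.prod_congr rfl fun i hi => ?_
      rw [(Finset.mem_filter.mp hi).2]
    rw [hp, hf, ← Finset.prod_mul_distrib]
    refine Finset.prod_congr rfl fun j _ => ?_
    rw [pow_add, pow_one]
  simp_rw [h1]
  have h2 : ∀ S : Finset (Fin d),
      (∏ j, (if j ∈ S then (-1 : ℝ) else 1) ^ (1 + c j))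
      = (∏ j ∈ S, ((-1 : ℝ)) ^ (1 + c j)) * ∏ j ∈ Sᶜ, (1 : ℝ) := by
    intro S
    have : ∀ j : Fin d, (if j ∈ S then (-1 : ℝ) else 1) ^ (1 + c j)
        = if j ∈ S then (-1 : ℝ) ^ (1 + c j) else 1 := by
      intro j; split <;> simp
    simp_rw [this]
    rw [Finset.prod_ite_mem, univ_inter, Finset.prod_const_one, mul_one]
  simp_rw [h2]
  rw [← Fintype.prod_add]
  by_cases hb : Function.Bijective f
  · rw [if_pos hb]
    have hcj : ∀ j, c j = 1 := by
      intro j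
      obtain ⟨a, ha⟩ := hb.surjective j
      have : univ.filter (fun i => f i = j) = {a} := by
        ext i
        simp only [Finset.mem_filter, mem_univ, true_and, Finset.mem_singleton]
        constructor
        · intro h; exact hb.injective (h.trans ha.symm)
        · rintro rfl; exact ha
      simp [hc, this]
    have : ∀ j : Fin d, (-1 : ℝ) ^ (1 + c j) + 1 = 2 := by
      intro j; rw [hcj j]; norm_num
    simp_rw [this]
    simp
  · rw [if_neg hb]
    have hs : ¬ Function.Surjective f := fun h =>
      hb (Finite.surjective_iff_bijective.mp h)
    obtain ⟨j, hj⟩ := not_forall.mp fun h => hs fun y => h y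
    refine Finset.prod_eq_zero (mem_univ j) ?_
    have : c j = 0 := by
      rw [hc]
      simp only [Finset.card_eq_zero, Finset.filter_eq_empty_iff]
      exact fun i _ h => hj ⟨i, h⟩
    rw [this]; norm_num

lemma my_card_bijective (d : ℕ) :
    (univ.filter (fun f : Fin d → Fin d => Function.Bijective f)).card = d.factorial := by
  rw [← Fintype.card_subtype]
  rw [Fintype.card_congr
    (⟨fun p => Equiv.ofBijective p.1 p.2, fun e => ⟨e, e.bijective⟩,
      fun p => rfl, fun e => Equiv.ext fun x => rfl⟩ :
      {f : Fin d → Fin d // Function.Bijective f} ≃ Equiv.Perm (Fin d))]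
  simp [Fintype.card_perm]

/-- For `d ≥ 1` and `x ∈ ℝ^d`,
`Σ_{S ⊆ {1,…,d}} (−1)^{|S|} · (Σ_j s_j(S)·x_j)^d = 2^d · d! · Π_j x_j`, where
`s_j(S) = −1` if `j ∈ S` and `+1` otherwise. -/
theorem alternating_subset_sum_pow_eq_prod
    (d : ℕ) (hd : 1 ≤ d) (x : Fin d → ℝ) :
    ∑ S : Finset (Fin d),
      (-1 : ℝ) ^ S.card * (∑ j, (if j ∈ S then (-1 : ℝ) else 1) * x j) ^ d
      = 2 ^ d * (d.factorial : ℝ) * ∏ j, x j := by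

  have step1 : ∀ S : Finset (Fin d),
      (-1 : ℝ) ^ S.card * (∑ j, (if j ∈ S then (-1 : ℝ) else 1) * x j) ^ d
      = ∑ p : Fin d → Fin d,
          ((-1 : ℝ) ^ S.card * ∏ i, (if p i ∈ S then (-1 : ℝ) else 1)) * ∏ i, x (p i) := by
    intro S
    rw [Fintype.sum_pow, Finset.mul_sum]
    refine Finset.sum_congr rfl fun p _ => ?_
    rw [Finset.prod_mul_distrib, mul_assoc]
  simp_rw [step1]
  rw [Finset.sum_comm]
  have step2 : ∀ p : Fin d → Fin d,
      (∑ S : Finset (Fin d),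
        ((-1 : ℝ) ^ S.card * ∏ i, (if p i ∈ S then (-1 : ℝ) else 1)) * ∏ i, x (p i))
      = if Function.Bijective p then (2 : ℝ) ^ d * ∏ j, x j else 0 := by
    intro p
    rw [← Finset.sum_mul, key_sum]
    by_cases hb : Function.Bijective p
    · rw [if_pos hb, if_pos hb, hb.prod_comp]
    · rw [if_neg hb, if_neg hb, zero_mul]
  simp_rw [step2]
  rw [← Finset.sum_filter, Finset.sum_const, my_card_bijective, nsmul_eq_mul]
  ring
end

section
/- For every d ≥ 1 there exist n = 2^d real weights v¹, …, vⁿ and vectors w¹, …, wⁿ ∈ ℝ^d such that, as an identity of functions on ℝ^d (equivalently, of polynomials in x₁, …, x_d): Σ_{i=1}^n vⁱ · ((wⁱ)ᵀx)^d = Π_{j=1}^d x_j, and Σ_{i=1}^n vⁱ · ((wⁱ)ᵀx)^k = 0 for every natural number k with k < d. -/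
open Finset

noncomputable def sgn : Bool → ℝ := fun b => if b then 1 else -1

lemma sum_prod_bool {d : ℕ} (g : Fin d → Bool → ℝ) :
    ∑ ε : Fin d → Bool, ∏ j, g j (ε j) = ∏ j, ∑ b : Bool, g j b := by
  rw [Finset.prod_univ_sum, Fintype.piFinset_univ]

lemma prod_comp_fiber {d k : ℕ} (f : Fin k → Fin d) (y : Fin d → ℝ) :
    ∏ t : Fin k, y (f t) = ∏ j : Fin d, y j ^ (univ.filter fun t => f t = j).card := by
  rw [← Finset.prod_fiberwise_of_maps_to (fun t _ => mem_univ (f t)) (fun t => y (f t))]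
  refine Finset.prod_congr rfl fun j _ => ?_
  rw [Finset.prod_congr rfl (fun t ht => ?_), Finset.prod_const]
  exact congrArg y (mem_filter.mp ht).2

lemma core (d k : ℕ) (x : Fin d → ℝ) (hk : k ≤ d) :
    ∑ ε : Fin d → Bool, (∏ j, sgn (ε j)) * (∑ j, sgn (ε j) * x j) ^ k
      = if k = d then (2 ^ d * d.factorial : ℝ) * ∏ j, x j else 0 := by
  have step1 : ∀ ε : Fin d → Bool,
      (∏ j, sgn (ε j)) * (∑ j, sgn (ε j) * x j) ^ k
        = ∑ f : Fin k → Fin d, (∏ t, x (f t)) *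
            ∏ j, sgn (ε j) ^ ((univ.filter fun t => f t = j).card + 1) := by
    intro ε
    have h1 : (∑ j, sgn (ε j) * x j) ^ k = ∏ _t : Fin k, ∑ j, sgn (ε j) * x j := by
      rw [Finset.prod_const, Finset.card_univ, Fintype.card_fin]
    rw [h1, Finset.prod_univ_sum, Fintype.piFinset_univ, Finset.mul_sum]
    refine Finset.sum_congr rfl fun f _ => ?_
    rw [Finset.prod_mul_distrib, prod_comp_fiber f (fun j => sgn (ε j))]
    rw [show (∏ j, sgn (ε j)) * ((∏ j, sgn (ε j) ^ (univ.filter fun t => f t = j).card) *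
          ∏ t, x (f t))
        = (∏ t, x (f t)) * ((∏ j, sgn (ε j)) *
            ∏ j, sgn (ε j) ^ (univ.filter fun t => f t = j).card) by ring]
    congr 1
    rw [← Finset.prod_mul_distrib]
    exact Finset.prod_congr rfl fun j _ => by rw [pow_succ]; ring
  calc ∑ ε : Fin d → Bool, (∏ j, sgn (ε j)) * (∑ j, sgn (ε j) * x j) ^ k
      = ∑ f : Fin k → Fin d, (∏ t, x (f t)) *
          ∏ j, (1 + (-1 : ℝ) ^ ((univ.filter fun t => f t = j).card + 1)) := by
        rw [Finset.sum_congr rfl fun ε _ => step1 ε, Finset.sum_comm]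
        refine Finset.sum_congr rfl fun f _ => ?_
        rw [← Finset.mul_sum,
          sum_prod_bool (fun j b => sgn b ^ ((univ.filter fun t => f t = j).card + 1))]
        congr 1
        refine Finset.prod_congr rfl fun j _ => ?_
        simp [sgn]
    _ = if k = d then (2 ^ d * d.factorial : ℝ) * ∏ j, x j else 0 := ?_
  by_cases hkd : k = d
  · subst hkd
    rw [if_pos rfl]
    have hterm : ∀ f : Fin k → Fin k,
        (∏ t, x (f t)) * ∏ j, (1 + (-1:ℝ) ^ ((univ.filter fun t => f t = j).card + 1))
          = if Function.Bijective f then (2:ℝ) ^ k * ∏ j, x j else 0 := by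
      intro f
      by_cases hf : Function.Bijective f
      · rw [if_pos hf]
        have hfib : ∀ j, (univ.filter fun t => f t = j).card = 1 := by
          intro j
          have h : (univ.filter fun t => f t = j) = {(Equiv.ofBijective f hf).symm j} := by
            ext t
            simp only [Finset.mem_filter, Finset.mem_univ, true_and, Finset.mem_singleton,
              Equiv.eq_symm_apply, Equiv.ofBijective_apply]
          rw [h, Finset.card_singleton]
        have hx : ∏ t, x (f t) = ∏ j, x j := by
          have h := Equiv.prod_comp (Equiv.ofBijective f hf) x
          simpa only [Equiv.ofBijective_apply] using h
        have hp : ∏ j : Fin k, (1 + (-1:ℝ) ^ ((univ.filter fun t => f t = j).card + 1))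
            = (2:ℝ) ^ k := by
          have h2 : ∀ j : Fin k,
              (1 + (-1:ℝ) ^ ((univ.filter fun t => f t = j).card + 1)) = 2 := fun j => by
            rw [hfib j]; norm_num
          rw [Finset.prod_congr rfl fun j _ => h2 j, Finset.prod_const,
            Finset.card_univ, Fintype.card_fin]
        rw [hx, hp]; ring
      · rw [if_neg hf]
        have hsurj : ¬ Function.Surjective f := fun hs =>
          hf ⟨(Finite.injective_iff_surjective).mpr hs, hs⟩
        obtain ⟨j, hj⟩ : ∃ j, ∀ t, f t ≠ j := by
          simpa [Function.Surjective, not_forall] using hsurj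
        have hz : (univ.filter fun t => f t = j).card = 0 := by
          rw [Finset.card_eq_zero]
          ext t; simp [hj t]
        have hp : ∏ j' : Fin k, (1 + (-1:ℝ) ^ ((univ.filter fun t => f t = j').card + 1)) = 0 :=
          Finset.prod_eq_zero (Finset.mem_univ j) (by rw [hz]; norm_num)
        rw [hp, mul_zero]
    rw [Finset.sum_congr rfl fun f _ => hterm f, Finset.sum_ite, Finset.sum_const,
      Finset.sum_const_zero, add_zero]
    have hcard : (univ.filter fun f : Fin k → Fin k => Function.Bijective f).card
        = k.factorial := by
      have h : (univ : Finset (Equiv.Perm (Fin k))).card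
          = (univ.filter fun f : Fin k → Fin k => Function.Bijective f).card :=
        Finset.card_bij
          (fun (σ : Equiv.Perm (Fin k)) (_ : σ ∈ (univ : Finset (Equiv.Perm (Fin k)))) => ⇑σ)
          (fun σ _ => Finset.mem_filter.mpr ⟨Finset.mem_univ _, σ.bijective⟩)
          (fun a _ b _ h => Equiv.coe_fn_injective h)
          (fun f hf => ⟨Equiv.ofBijective f (Finset.mem_filter.mp hf).2, Finset.mem_univ _, rfl⟩)
      rw [← h, Finset.card_univ, Fintype.card_perm, Fintype.card_fin]
    rw [hcard, nsmul_eq_mul]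
    ring
  · rw [if_neg hkd]
    have hklt : k < d := lt_of_le_of_ne hk hkd
    refine Finset.sum_eq_zero fun f _ => ?_
    have hsurj : ¬ Function.Surjective f := fun hs => by
      have := Fintype.card_le_of_surjective f hs
      simp only [Fintype.card_fin] at this
      omega
    obtain ⟨j, hj⟩ : ∃ j, ∀ t, f t ≠ j := by
      simpa [Function.Surjective, not_forall] using hsurj
    have hz : (univ.filter fun t => f t = j).card = 0 := by
      rw [Finset.card_eq_zero]
      ext t; simp [hj t]
    have hp : ∏ j' : Fin d, (1 + (-1:ℝ) ^ ((univ.filter fun t => f t = j').card + 1)) = 0 :=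
      Finset.prod_eq_zero (Finset.mem_univ j) (by rw [hz]; norm_num)
    rw [hp, mul_zero]

/-- For every `d ≥ 1`, there exist `n = 2^d` real weights `v¹,…,vⁿ` and vectors
`w¹,…,wⁿ ∈ ℝ^d` such that, as an identity of functions on `ℝ^d`,
`Σᵢ vⁱ ((wⁱ)ᵀx)^d = Π_j x_j` and `Σᵢ vⁱ ((wⁱ)ᵀx)^k = 0` for all `k < d`. -/
theorem exists_ensemble_exact_monomial_representation
    (d : ℕ) (hd : 1 ≤ d) :
    ∃ (v : Fin (2 ^ d) → ℝ) (w : Fin (2 ^ d) → Fin d → ℝ),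
      (∀ x : Fin d → ℝ,
        ∑ i, v i * (∑ j, w i j * x j) ^ d = ∏ j, x j) ∧
      (∀ k : ℕ, k < d → ∀ x : Fin d → ℝ,
        ∑ i, v i * (∑ j, w i j * x j) ^ k = 0) := by
  have hcard : Fintype.card (Fin d → Bool) = 2 ^ d := by simp
  set C : ℝ := 2 ^ d * d.factorial with hC
  have hC0 : C ≠ 0 := by
    have h1 : (0:ℝ) < 2 ^ d := by positivity
    have h2 : (0:ℝ) < d.factorial := by exact_mod_cast d.factorial_pos
    exact ne_of_gt (mul_pos h1 h2)
  let e : (Fin d → Bool) ≃ Fin (2 ^ d) := Fintype.equivFinOfCardEq hcard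
  have key : ∀ (k : ℕ), k ≤ d → ∀ x : Fin d → ℝ,
      ∑ i : Fin (2 ^ d), (∏ j, sgn (e.symm i j)) / C * (∑ j, sgn (e.symm i j) * x j) ^ k
        = (if k = d then C * ∏ j, x j else 0) / C := by
    intro k hk x
    rw [Equiv.sum_comp e.symm
      (fun ε : Fin d → Bool => (∏ j, sgn (ε j)) / C * (∑ j, sgn (ε j) * x j) ^ k)]
    rw [Finset.sum_congr rfl fun ε _ =>
      div_mul_eq_mul_div (∏ j, sgn (ε j)) C ((∑ j, sgn (ε j) * x j) ^ k)]
    rw [← Finset.sum_div, core d k x hk]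
  refine ⟨fun i => (∏ j, sgn (e.symm i j)) / C, fun i j => sgn (e.symm i j), ?_, ?_⟩
  · intro x
    rw [key d le_rfl x, if_pos rfl]
    field_simp
  · intro k hk x
    rw [key k hk.le x, if_neg (Nat.ne_of_lt hk), zero_div]
end

section
/- Let d ≥ 1 and let f : ℝ → ℝ be d-times continuously differentiable on a neighborhood of 0, with a_d := f^{(d)}(0)/d! ≠ 0. Then for every x ∈ ℝ^d, the scaled single-layer ensemble of n = 2^d units given by F_h(x) = (2^d · d! · a_d · h^d)^{−1} · Σ_{S ⊆ {1,…,d}} (−1)^{|S|} · f(h · Σ_{j=1}^d s_j(S)·x_j) converges to Π_{j=1}^d x_j as h → 0 (h ≠ 0). In particular, the monomial Π_{j=1}^d x_j can be approximated to any desired accuracy ε > 0 by a one-layer ensemble model with 2^d unit models. -/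
open Filter

open Asymptotics Polynomial

lemma peano_aux : ∀ (n : ℕ) (g : ℝ → ℝ) (s : Set ℝ), IsOpen s → (0:ℝ) ∈ s →
    ContDiffOn ℝ n g s → (∀ k ≤ n, iteratedDeriv k g 0 = 0) →
    g =o[nhds 0] fun t : ℝ => t ^ n := by
  intro n
  induction n with
  | zero =>
    intro g s hs h0 hg hder
    simp only [pow_zero]
    rw [isLittleO_one_iff]
    have hc : ContinuousAt g 0 := (hg.continuousOn.continuousAt (hs.mem_nhds h0))
    have := hder 0 le_rfl
    simp only [iteratedDeriv_zero] at this
    simpa [this] using hc.tendsto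
  | succ n ih =>
    intro g s hs h0 hg hder
    have hg2 : ContDiffOn ℝ ((n : WithTop ℕ∞) + 1) g s := by exact_mod_cast hg
    rw [contDiffOn_succ_iff_deriv_of_isOpen hs] at hg2
    have hdiff : DifferentiableOn ℝ g s := hg2.1
    have hg' : ContDiffOn ℝ n (deriv g) s := hg2.2.2
    have hder' : ∀ k ≤ n, iteratedDeriv k (deriv g) 0 = 0 := by
      intro k hk
      rw [← iteratedDeriv_succ']
      exact hder (k+1) (Nat.succ_le_succ hk)
    have IH := ih (deriv g) s hs h0 hg' hder'
    have hg0 : g 0 = 0 := by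
      have := hder 0 (Nat.zero_le _)
      simpa [iteratedDeriv_zero] using this
    rw [isLittleO_iff]
    intro c hc
    rw [isLittleO_iff] at IH
    have hball := Metric.mem_nhds_iff.mp
      ((IH hc).and (hs.mem_nhds h0 : ∀ᶠ y in nhds (0:ℝ), y ∈ s))
    obtain ⟨δ, hδ, hb⟩ := hball
    rw [Metric.eventually_nhds_iff]
    refine ⟨δ, hδ, fun t ht => ?_⟩
    simp only [dist_zero_right, Real.norm_eq_abs] at ht
    have hsub : Metric.closedBall (0:ℝ) |t| ⊆ Metric.ball 0 δ := by
      intro y hy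
      simp only [Metric.mem_closedBall, Metric.mem_ball, dist_zero_right, Real.norm_eq_abs] at *
      exact lt_of_le_of_lt hy ht
    have key : ‖g t - g 0‖ ≤ (c * |t|^n) * ‖t - 0‖ := by
      apply Convex.norm_image_sub_le_of_norm_deriv_le
        (fun y hy => ((hdiff y (hb (hsub hy)).2).differentiableAt (hs.mem_nhds (hb (hsub hy)).2)))
        (fun y hy => ?_) (convex_closedBall _ _)
        (by simp [Metric.mem_closedBall, abs_nonneg]) (by simp [Metric.mem_closedBall])
      have h1 := (hb (hsub hy)).1
      simp only [Real.norm_eq_abs, abs_pow] at h1 ⊢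
      refine h1.trans ?_
      have : |y| ≤ |t| := by simpa [Real.dist_eq] using hy
      exact mul_le_mul_of_nonneg_left (pow_le_pow_left₀ (abs_nonneg _) this n) hc.le
    rw [hg0, sub_zero, sub_zero] at key
    calc ‖g t‖ ≤ (c * |t|^n) * ‖t‖ := key
    _ = c * ‖t ^ (n+1)‖ := by
      simp [Real.norm_eq_abs, abs_pow, pow_succ]; ring

lemma claimC : ∀ (d : ℕ) (p : ℝ[X]) (x : Fin d → ℝ),
    p.natDegree ≤ d →
    ∑ σ : Fin d → Bool, (∏ j, (if σ j then (-1:ℝ) else 1)) *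
        p.eval (∑ j, (if σ j then (-1:ℝ) else 1) * x j)
      = p.coeff d * 2 ^ d * d.factorial * ∏ j, x j := by
  intro d
  induction d with
  | zero =>
    intro p x hp
    simp [Polynomial.coeff_zero_eq_eval_zero]
  | succ d ih =>
    intro p x hp
    set a := x 0 with ha
    set q : ℝ[X] := taylor a p - taylor (-a) p with hq
    have hqc : ∀ k, q.coeff k = (hasseDeriv k p).eval a - (hasseDeriv k p).eval (-a) := by
      intro k; simp [hq, taylor_coeff]
    have hconst : ∀ m, d < m → (hasseDeriv m p).natDegree = 0 := by
      intro m hm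
      have h1 : (hasseDeriv m p).natDegree ≤ p.natDegree - m := natDegree_hasseDeriv_le _ _
      have : p.natDegree - m = 0 := Nat.sub_eq_zero_of_le (hp.trans hm)
      omega
    have hdeg : q.natDegree ≤ d := by
      rw [Polynomial.natDegree_le_iff_coeff_eq_zero]
      intro m hm
      rw [hqc m]
      obtain ⟨c, hc⟩ := Polynomial.natDegree_eq_zero.mp (hconst m hm)
      rw [← hc]; simp
    have hr1 : (hasseDeriv d p).natDegree < 2 := by
      have h1 : (hasseDeriv d p).natDegree ≤ p.natDegree - d := natDegree_hasseDeriv_le _ _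
      omega
    have hcd : q.coeff d = 2 * a * (d+1) * p.coeff (d+1) := by
      rw [hqc d, Polynomial.eval_eq_sum_range' hr1, Polynomial.eval_eq_sum_range' hr1]
      simp only [Finset.sum_range_succ, Finset.sum_range_zero, hasseDeriv_coeff,
        pow_zero, pow_one, zero_add]
      have hch : (1+d).choose d = d+1 := by
        rw [Nat.add_comm]; exact Nat.choose_succ_self_right d
      rw [hch]
      have hch0 : d.choose d = 1 := Nat.choose_self d
      rw [Nat.add_comm 1 d, hch0]
      push_cast
      ring
    have hsum : ∑ σ : Fin (d+1) → Bool, (∏ j, (if σ j then (-1:ℝ) else 1)) *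
        p.eval (∑ j, (if σ j then (-1:ℝ) else 1) * x j)
      = ∑ σ : Fin d → Bool, (∏ j, (if σ j then (-1:ℝ) else 1)) *
        q.eval (∑ j, (if σ j then (-1:ℝ) else 1) * x j.succ) := by
      rw [← Fintype.sum_equiv (Fin.consEquiv fun _ => Bool)
        (fun pr : Bool × (Fin d → Bool) =>
          (∏ j, (if (Fin.cons pr.1 pr.2 : Fin (d+1) → Bool) j then (-1:ℝ) else 1)) *
          p.eval (∑ j, (if (Fin.cons pr.1 pr.2 : Fin (d+1) → Bool) j then (-1:ℝ) else 1) * x j))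
        (fun σ : Fin (d+1) → Bool => (∏ j, (if σ j then (-1:ℝ) else 1)) *
          p.eval (∑ j, (if σ j then (-1:ℝ) else 1) * x j))
        (fun pr => rfl)]
      rw [Fintype.sum_prod_type, Fintype.sum_bool]
      rw [← Finset.sum_add_distrib]
      refine Finset.sum_congr rfl fun σ _ => ?_
      simp only [Fin.prod_univ_succ, Fin.sum_univ_succ, Fin.cons_zero, Fin.cons_succ, Bool.false_eq_true, if_false,
        reduceIte]
      set y := ∑ j : Fin d, (if σ j then (-1:ℝ) else 1) * x j.succ with hy
      rw [hq]
      simp only [Polynomial.eval_sub, Polynomial.taylor_eval]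
      rw [show (-1:ℝ) * x 0 + y = y + -a by rw [ha]; ring,
          show (1:ℝ) * x 0 + y = y + a by rw [ha]; ring]
      ring
    rw [hsum, ih q (fun j => x j.succ) hdeg, hcd, Fin.prod_univ_succ]
    push_cast [Nat.factorial_succ]
    ring

lemma conv_sum (d : ℕ) (g : ℝ → ℝ) (z : Fin d → ℝ) :
    ∑ S : Finset (Fin d), (-1:ℝ)^S.card * g (∑ j, (if j ∈ S then (-1:ℝ) else 1) * z j)
    = ∑ σ : Fin d → Bool, (∏ j, if σ j then (-1:ℝ) else 1) *
        g (∑ j, (if σ j then (-1:ℝ) else 1) * z j) := by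
  classical
  refine Fintype.sum_equiv
    ⟨fun S j => decide (j ∈ S), fun σ => Finset.univ.filter (fun j => σ j = true),
      fun S => by ext j; simp, fun σ => by funext j; simp⟩ _ _ (fun S => ?_)
  simp only [Equiv.coe_fn_mk]
  have h1 : ∀ j, (if decide (j ∈ S) = true then (-1:ℝ) else 1) = (if j ∈ S then (-1:ℝ) else 1) := by
    intro j; simp
  have h2 : (∏ j, if decide (j ∈ S) = true then (-1:ℝ) else 1) = (-1:ℝ)^S.card := by
    simp only [h1]
    rw [← Finset.prod_filter_mul_prod_filter_not Finset.univ (· ∈ S)]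
    have hA : ∀ j ∈ Finset.univ.filter (· ∈ S), (if j ∈ S then (-1:ℝ) else 1) = -1 :=
      fun j hj => if_pos (Finset.mem_filter.mp hj).2
    have hB : ∀ j ∈ Finset.univ.filter (fun j => ¬ j ∈ S), (if j ∈ S then (-1:ℝ) else 1) = 1 :=
      fun j hj => if_neg (Finset.mem_filter.mp hj).2
    rw [Finset.prod_congr rfl hA, Finset.prod_congr rfl hB, Finset.prod_const,
      Finset.prod_const_one, mul_one]
    congr 1
    congr 1
    ext j; simp
  rw [h2]
  congr 1
  refine congrArg g (Finset.sum_congr rfl fun j _ => ?_)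
  rw [h1]

lemma contDiff_polyeval (P : ℝ[X]) (n : ℕ) : ContDiff ℝ n fun t : ℝ => P.eval t := by
  induction P using Polynomial.induction_on' with
  | add p q hp hq => simpa [Polynomial.eval_add] using hp.add hq
  | monomial k c =>
    simp only [Polynomial.eval_monomial]
    fun_prop

lemma iteratedDeriv_polyeval (k : ℕ) : ∀ (P : ℝ[X]),
    iteratedDeriv k (fun t => P.eval t) = fun t => (derivative^[k] P).eval t := by
  induction k with
  | zero => intro P; simp
  | succ k ih =>
    intro P
    rw [iteratedDeriv_succ']
    have : deriv (fun t : ℝ => P.eval t) = fun t => P.derivative.eval t := by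
      funext t; exact Polynomial.deriv (p := P)
    rw [this, ih, Function.iterate_succ_apply]

/-- Let `f : ℝ → ℝ` be `d`-times continuously differentiable near `0` with
`a_d := f^{(d)}(0)/d! ≠ 0`. Then for every `x ∈ ℝ^d`, the scaled ensemble of
`2^d` units
`F_h(x) = (2^d · d! · a_d · h^d)⁻¹ · Σ_S (−1)^{|S|} f(h · Σ_j s_j(S) x_j)`
converges to `Π_j x_j` as `h → 0`, `h ≠ 0`. In particular, the monomial can be
approximated to any accuracy `ε > 0` by a one-layer ensemble with `2^d` units. -/
theorem scaled_ensemble_tendsto_monomial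
    (d : ℕ) (hd : 1 ≤ d) (f : ℝ → ℝ)
    (hf : ContDiffAt ℝ d f 0)
    (a : ℝ) (ha : a = iteratedDeriv d f 0 / d.factorial) (hane : a ≠ 0)
    (x : Fin d → ℝ) :
    Tendsto
      (fun h : ℝ =>
        (2 ^ d * (d.factorial : ℝ) * a * h ^ d)⁻¹ *
          ∑ S : Finset (Fin d),
            (-1 : ℝ) ^ S.card *
              f (h * ∑ j, (if j ∈ S then (-1 : ℝ) else 1) * x j))
      (nhdsWithin 0 {(0 : ℝ)}ᶜ) (nhds (∏ j, x j)) ∧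
    ∀ ε : ℝ, 0 < ε → ∃ h : ℝ, h ≠ 0 ∧
      |(2 ^ d * (d.factorial : ℝ) * a * h ^ d)⁻¹ *
          (∑ S : Finset (Fin d),
            (-1 : ℝ) ^ S.card *
              f (h * ∑ j, (if j ∈ S then (-1 : ℝ) else 1) * x j)) -
        ∏ j, x j| < ε := by
  classical
  set P : ℝ[X] := ∑ k ∈ Finset.range (d+1),
      Polynomial.C (iteratedDeriv k f 0 / (k.factorial : ℝ)) * Polynomial.X ^ k with hP
  have hPcoeff : ∀ m, P.coeff m =
      if m ≤ d then iteratedDeriv m f 0 / (m.factorial : ℝ) else 0 := by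
    intro m
    rw [hP, Polynomial.finset_sum_coeff]
    simp only [Polynomial.coeff_C_mul, Polynomial.coeff_X_pow, mul_ite, mul_one, mul_zero]
    rw [Finset.sum_ite_eq (Finset.range (d+1)) m
      (fun k => iteratedDeriv k f 0 / (k.factorial : ℝ))]
    simp [Nat.lt_succ_iff]
  have hPdeg : P.natDegree ≤ d := by
    rw [Polynomial.natDegree_le_iff_coeff_eq_zero]
    intro m hm; rw [hPcoeff m, if_neg (by omega)]
  have hPd : P.coeff d = a := by rw [hPcoeff d, if_pos le_rfl, ha]
  obtain ⟨u, hu, hfu⟩ := hf.contDiffOn le_rfl (by simp)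
  obtain ⟨s, hsu, hs_open, hs0⟩ := mem_nhds_iff.mp hu
  set g : ℝ → ℝ := fun t => f t - P.eval t with hg
  have hgs : ContDiffOn ℝ d g s := (hfu.mono hsu).sub ((contDiff_polyeval P d).contDiffOn)
  have hder : ∀ k ≤ d, iteratedDeriv k g 0 = 0 := by
    intro k hk
    have hks : (k : WithTop ℕ∞) ≤ (d : WithTop ℕ∞) := by exact_mod_cast hk
    have hfs : ContDiffOn ℝ k f s := (hfu.mono hsu).of_le hks
    have hPs : ContDiffOn ℝ k (fun t => P.eval t) s := (contDiff_polyeval P k).contDiffOn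
    have e1 : iteratedDeriv k g 0 = iteratedDerivWithin k g s 0 := by
      simp [iteratedDerivWithin, iteratedDeriv, iteratedFDerivWithin_of_isOpen k hs_open hs0]
    rw [e1, show g = (f - fun t => P.eval t) from rfl,
      iteratedDerivWithin_sub hs0 hs_open.uniqueDiffOn (hfs 0 hs0) (hPs 0 hs0)]
    have e2 : iteratedDerivWithin k f s 0 = iteratedDeriv k f 0 := by
      simp [iteratedDerivWithin, iteratedDeriv, iteratedFDerivWithin_of_isOpen k hs_open hs0]
    have e3 : iteratedDerivWithin k (fun t => P.eval t) s 0
        = iteratedDeriv k (fun t => P.eval t) 0 := by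
      simp [iteratedDerivWithin, iteratedDeriv, iteratedFDerivWithin_of_isOpen k hs_open hs0]
    rw [e2, e3, iteratedDeriv_polyeval k P]
    beta_reduce
    have e4 : (Polynomial.derivative^[k] P).eval 0 = (k.factorial : ℝ) * P.coeff k := by
      rw [← Polynomial.coeff_zero_eq_eval_zero, Polynomial.coeff_iterate_derivative]
      simp [Nat.descFactorial_self, nsmul_eq_mul]
    rw [e4, hPcoeff k, if_pos hk]
    have : (k.factorial : ℝ) ≠ 0 := Nat.cast_ne_zero.mpr k.factorial_ne_zero
    field_simp
    simp
  have hgo := peano_aux d g s hs_open hs0 hgs hder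
  set Y : (Fin d → Bool) → ℝ := fun σ => ∑ j, (if σ j then (-1:ℝ) else 1) * x j with hY
  set R : ℝ → ℝ :=
    fun h => ∑ σ : Fin d → Bool, (∏ j, if σ j then (-1:ℝ) else 1) * g (h * Y σ) with hR
  have hRo : R =o[nhds 0] fun h : ℝ => h ^ d := by
    apply Asymptotics.IsLittleO.fun_sum
    intro σ _
    have ht : Tendsto (fun h : ℝ => h * Y σ) (nhds 0) (nhds 0) := by
      simpa using (continuous_mul_right (Y σ)).tendsto 0
    have h1 : (fun h : ℝ => g (h * Y σ)) =o[nhds 0] fun h => (h * Y σ) ^ d :=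
      hgo.comp_tendsto ht
    have h2 : (fun h : ℝ => (h * Y σ)^d) =O[nhds 0] fun h => h ^ d := by
      rw [Asymptotics.isBigO_iff]
      refine ⟨|Y σ|^d, Eventually.of_forall fun h => ?_⟩
      simp only [Real.norm_eq_abs, mul_pow, abs_mul, abs_pow]
      rw [mul_comm]
    exact (h1.trans_isBigO h2).const_mul_left _
  have hC : (2:ℝ)^d * (d.factorial : ℝ) * a ≠ 0 :=
    mul_ne_zero (mul_ne_zero (pow_ne_zero _ two_ne_zero)
      (Nat.cast_ne_zero.mpr d.factorial_ne_zero)) hane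
  have hdecomp : ∀ h : ℝ,
      (∑ S : Finset (Fin d), (-1:ℝ)^S.card *
        f (h * ∑ j, (if j ∈ S then (-1:ℝ) else 1) * x j))
      = (2:ℝ)^d * (d.factorial : ℝ) * a * h^d * ∏ j, x j + R h := by
    intro h
    rw [conv_sum d (fun t => f (h * t)) x]
    have hterm : ∀ σ : Fin d → Bool,
        (∏ j, if σ j then (-1:ℝ) else 1) * f (h * ∑ j, (if σ j then (-1:ℝ) else 1) * x j)
        = (∏ j, if σ j then (-1:ℝ) else 1) *
            P.eval (∑ j, (if σ j then (-1:ℝ) else 1) * (h * x j))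
          + (∏ j, if σ j then (-1:ℝ) else 1) * g (h * Y σ) := by
      intro σ
      have harg : h * Y σ = ∑ j, (if σ j then (-1:ℝ) else 1) * (h * x j) := by
        rw [hY, Finset.mul_sum]
        exact Finset.sum_congr rfl fun j _ => by ring
      have hgval : f (h * Y σ) = P.eval (h * Y σ) + g (h * Y σ) := by
        rw [hg]; ring
      rw [hY] at hgval ⊢
      rw [hgval, ← hY, harg]
      ring
    rw [Finset.sum_congr rfl fun σ _ => hterm σ, Finset.sum_add_distrib,
      claimC d P (fun j => h * x j) hPdeg, hPd]
    have hprod : (∏ j, h * x j) = h^d * ∏ j, x j := by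
      rw [Finset.prod_mul_distrib, Finset.prod_const, Finset.card_univ, Fintype.card_fin]
    rw [hprod]
    simp only [hR]
    ring
  have hdiv : Tendsto (fun h : ℝ => R h / h^d) (nhdsWithin 0 {(0:ℝ)}ᶜ) (nhds 0) :=
    (hRo.tendsto_div_nhds_zero).mono_left nhdsWithin_le_nhds
  have hlim : Tendsto
      (fun h : ℝ => (∏ j, x j) + ((2:ℝ)^d * (d.factorial : ℝ) * a)⁻¹ * (R h / h^d))
      (nhdsWithin 0 {(0:ℝ)}ᶜ) (nhds (∏ j, x j)) := by
    have := Tendsto.add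
      (tendsto_const_nhds (x := ∏ j, x j) (f := nhdsWithin (0:ℝ) {(0:ℝ)}ᶜ))
      (Tendsto.mul
        (tendsto_const_nhds (x := ((2:ℝ)^d * (d.factorial : ℝ) * a)⁻¹)
          (f := nhdsWithin (0:ℝ) {(0:ℝ)}ᶜ)) hdiv)
    simpa using this
  have hmain : Tendsto
      (fun h : ℝ =>
        (2 ^ d * (d.factorial : ℝ) * a * h ^ d)⁻¹ *
          ∑ S : Finset (Fin d),
            (-1 : ℝ) ^ S.card *
              f (h * ∑ j, (if j ∈ S then (-1 : ℝ) else 1) * x j))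
      (nhdsWithin 0 {(0 : ℝ)}ᶜ) (nhds (∏ j, x j)) := by
    refine Tendsto.congr' ?_ hlim
    filter_upwards [self_mem_nhdsWithin] with h hh
    have hh0 : (h : ℝ) ≠ 0 := hh
    rw [hdecomp h]
    have hhd : h^d ≠ 0 := pow_ne_zero _ hh0
    field_simp
  refine ⟨hmain, fun ε hε => ?_⟩
  have hev := Metric.tendsto_nhds.mp hmain ε hε
  obtain ⟨h, hmem, hdist⟩ := (hev.and self_mem_nhdsWithin).exists
  exact ⟨h, hdist, by rw [← Real.dist_eq]; exact hmem⟩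
end

section
/- Exactly 2^d unit models are necessary for exact single-layer representation of the monomial: if n ∈ ℕ, v¹, …, vⁿ ∈ ℝ and w¹, …, wⁿ ∈ ℝ^d satisfy, as identities in the polynomial ring ℝ[X₁,…,X_d], Σ_{i=1}^n vⁱ · (Σ_{j=1}^d wⁱ_j X_j)^d = X₁X₂⋯X_d and Σ_{i=1}^n vⁱ · (Σ_{j=1}^d wⁱ_j X_j)^k = 0 for every natural number k with k < d, then n ≥ 2^d. -/
open MvPolynomial Finset

private lemma prod_X_pow_univ {σ : Type*} [Fintype σ] [DecidableEq σ] (f : σ → ℕ) :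
    (∏ j, (MvPolynomial.X j : MvPolynomial σ ℝ) ^ f j)
      = MvPolynomial.monomial (Finsupp.equivFunOnFinite.symm f) 1 := by
  rw [← MvPolynomial.prod_X_pow_eq_monomial]
  refine (Finset.prod_subset (Finset.subset_univ _) ?_).symm
  intro j _ hj
  have : (Finsupp.equivFunOnFinite.symm f) j = 0 := Finsupp.notMem_support_iff.mp hj
  simp only [Finsupp.coe_equivFunOnFinite_symm] at this ⊢
  simp [this]

private lemma coeff_linpow {σ : Type*} [Fintype σ] [DecidableEq σ]
    (c : σ → ℝ) (k : ℕ) (m : σ →₀ ℕ) :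
    MvPolynomial.coeff m ((∑ j, MvPolynomial.C (c j) * MvPolynomial.X j : MvPolynomial σ ℝ) ^ k)
      = if (∑ j, m j) = k then (Nat.multinomial Finset.univ m : ℝ) * ∏ j, c j ^ m j else 0 := by
  rw [Finset.sum_pow_eq_sum_piAntidiag, MvPolynomial.coeff_sum]
  have hterm : ∀ f ∈ Finset.piAntidiag (Finset.univ : Finset σ) k,
      MvPolynomial.coeff m ((Nat.multinomial Finset.univ f : MvPolynomial σ ℝ) *
          ∏ j, (MvPolynomial.C (c j) * MvPolynomial.X j) ^ f j)
        = if f = ⇑m then (Nat.multinomial Finset.univ f : ℝ) * ∏ j, c j ^ f j else 0 := by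
    intro f _
    have h1 : (∏ j, (MvPolynomial.C (c j) * MvPolynomial.X j) ^ f j : MvPolynomial σ ℝ)
        = MvPolynomial.C (∏ j, c j ^ f j) *
            MvPolynomial.monomial (Finsupp.equivFunOnFinite.symm f) 1 := by
      rw [← prod_X_pow_univ f]
      calc (∏ j, (MvPolynomial.C (c j) * MvPolynomial.X j) ^ f j : MvPolynomial σ ℝ)
          = ∏ j, (MvPolynomial.C (c j ^ f j) * MvPolynomial.X j ^ f j) := by
            simp [mul_pow, MvPolynomial.C_pow]
        _ = (∏ j, MvPolynomial.C (c j ^ f j)) * ∏ j, MvPolynomial.X j ^ f j :=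
            Finset.prod_mul_distrib
        _ = MvPolynomial.C (∏ j, c j ^ f j) * ∏ j, MvPolynomial.X j ^ f j := by
            rw [map_prod]
    rw [h1, ← mul_assoc]
    have h2 : ((Nat.multinomial Finset.univ f : MvPolynomial σ ℝ) *
        MvPolynomial.C (∏ j, c j ^ f j)) =
        MvPolynomial.C ((Nat.multinomial Finset.univ f : ℝ) * ∏ j, c j ^ f j) := by
      rw [map_mul, MvPolynomial.C_eq_coe_nat]
    rw [h2, MvPolynomial.C_mul_monomial, mul_one, MvPolynomial.coeff_monomial]
    have h3 : (Finsupp.equivFunOnFinite.symm f = m) ↔ (f = ⇑m) := by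
      constructor
      · intro h; rw [← h]; rfl
      · intro h; rw [h, Finsupp.equivFunOnFinite_symm_coe]
    simp only [h3]
  rw [Finset.sum_congr rfl hterm, Finset.sum_ite_eq' (Finset.piAntidiag Finset.univ k) ⇑m
      (fun f => (Nat.multinomial Finset.univ f : ℝ) * ∏ j, c j ^ f j)]
  have h4 : (⇑m ∈ Finset.piAntidiag (Finset.univ : Finset σ) k) ↔ ((∑ j, m j) = k) := by
    rw [Finset.mem_piAntidiag]
    simp
  simp only [h4]


section Main
variable {d n : ℕ} (v : Fin n → ℝ) (w : Fin n → Fin d → ℝ)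

-- χ S as a Finsupp
private noncomputable def chi (S : Finset (Fin d)) : Fin d →₀ ℕ :=
  Finsupp.equivFunOnFinite.symm (fun j => if j ∈ S then 1 else 0)

private lemma chi_apply (S : Finset (Fin d)) (j : Fin d) :
    chi S j = if j ∈ S then 1 else 0 := rfl

private lemma sum_chi (S : Finset (Fin d)) : (∑ j, chi S j) = S.card := by
  simp [chi_apply, Finset.sum_ite_mem]

private lemma prod_pow_chi (x : Fin d → ℝ) (S : Finset (Fin d)) :
    (∏ j, x j ^ chi S j) = ∏ j ∈ S, x j := by
  calc (∏ j, x j ^ chi S j) = ∏ j, (if j ∈ S then x j else 1) := by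
        refine Finset.prod_congr rfl fun j _ => ?_
        rw [chi_apply]
        by_cases h : j ∈ S <;> simp [h]
    _ = ∏ j ∈ S, x j := by rw [Finset.prod_ite_mem, Finset.univ_inter]

private lemma chi_compl_add_chi_self (S : Finset (Fin d)) :
    chi Sᶜ + chi S = Finsupp.equivFunOnFinite.symm (fun _ => 1) := by
  ext j
  rw [Finsupp.add_apply, chi_apply, chi_apply]
  by_cases h : j ∈ S <;> simp [h, Finsupp.coe_equivFunOnFinite_symm]

private lemma chi_compl_add_chi_ne (S S' : Finset (Fin d)) (h : S' ≠ S) :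
    chi Sᶜ + chi S' ≠ Finsupp.equivFunOnFinite.symm (fun _ => 1) := by
  intro heq
  apply h
  ext j
  have hj := DFunLike.congr_fun heq j
  rw [Finsupp.add_apply, chi_apply, chi_apply] at hj
  have : (Finsupp.equivFunOnFinite.symm (fun _ : Fin d => (1:ℕ))) j = 1 := rfl
  rw [this] at hj
  by_cases h1 : j ∈ S <;> by_cases h2 : j ∈ S' <;>
    simp [h1, h2, Finset.mem_compl] at hj ⊢ <;> omega

end Main

/-- Necessity of `2^d` unit models for exact single-layer representation of the
monomial: if, as identities in `ℝ[X₁,…,X_d]`,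
`Σᵢ vⁱ (Σ_j wⁱ_j X_j)^d = X₁⋯X_d` and `Σᵢ vⁱ (Σ_j wⁱ_j X_j)^k = 0` for all
`k < d`, then `n ≥ 2^d`. -/
theorem ensemble_monomial_representation_needs_two_pow_units
    (d : ℕ) (hd : 1 ≤ d) (n : ℕ)
    (v : Fin n → ℝ) (w : Fin n → Fin d → ℝ)
    (hE1 : ∑ i, MvPolynomial.C (v i) *
        (∑ j, MvPolynomial.C (w i j) * MvPolynomial.X j) ^ d
      = ∏ j, (MvPolynomial.X j : MvPolynomial (Fin d) ℝ))
    (hE2 : ∀ k : ℕ, k < d →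
      ∑ i, MvPolynomial.C (v i) *
        (∑ j, MvPolynomial.C (w i j) * MvPolynomial.X j) ^ k
      = 0) :
    2 ^ d ≤ n := by
  classical
  set ones : Fin d →₀ ℕ := Finsupp.equivFunOnFinite.symm (fun _ => 1) with hones
  have hones_apply : ∀ j, ones j = 1 := fun j => rfl
  have hsum_ones : (∑ j, ones j) = d := by
    simp only [hones_apply]
    simp
  set μ : (Fin d →₀ ℕ) → ℝ := fun m => ∑ i, v i * ∏ j, w i j ^ m j with hμ
  have key : ∀ m : Fin d →₀ ℕ, (∑ j, m j) ≤ d →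
      (Nat.multinomial Finset.univ ⇑m : ℝ) * μ m = if ones = m then 1 else 0 := by
    intro m hm
    have hL : ∀ k : ℕ, MvPolynomial.coeff m (∑ i, MvPolynomial.C (v i) *
          (∑ j, MvPolynomial.C (w i j) * MvPolynomial.X j) ^ k)
        = if (∑ j, m j) = k then (Nat.multinomial Finset.univ ⇑m : ℝ) * μ m else 0 := by
      intro k
      rw [MvPolynomial.coeff_sum]
      simp only [MvPolynomial.coeff_C_mul, coeff_linpow]
      by_cases h : (∑ j, m j) = k
      · simp only [h, if_true, hμ, Finset.mul_sum]
        refine Finset.sum_congr rfl fun i _ => by ring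
      · simp [h]
    rcases lt_or_eq_of_le hm with h | h
    · have h0 := congrArg (MvPolynomial.coeff m) (hE2 _ h)
      rw [hL, if_pos rfl, MvPolynomial.coeff_zero] at h0
      rw [h0]
      have : ones ≠ m := by
        intro he
        rw [← he, hsum_ones] at h
        exact lt_irrefl d h
      rw [if_neg this]
    · have h0 := congrArg (MvPolynomial.coeff m) hE1
      rw [hL, if_pos h] at h0
      rw [h0]
      have hprod : (∏ j, (MvPolynomial.X j : MvPolynomial (Fin d) ℝ))
          = MvPolynomial.monomial ones 1 := by
        rw [← prod_X_pow_univ (fun _ : Fin d => 1)]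
        simp
      rw [hprod, MvPolynomial.coeff_monomial]
  have hmult_ne : ∀ m : Fin d →₀ ℕ, (Nat.multinomial Finset.univ ⇑m : ℝ) ≠ 0 := by
    intro m
    exact Nat.cast_ne_zero.mpr (Nat.multinomial_pos _ _).ne'
  have hone_ne : μ ones ≠ 0 := by
    intro h0
    have hk := key ones (le_of_eq hsum_ones)
    rw [h0, mul_zero, if_pos rfl] at hk
    exact one_ne_zero hk.symm
  have hzero : ∀ m : Fin d →₀ ℕ, (∑ j, m j) ≤ d → ones ≠ m → μ m = 0 := by
    intro m hm hne
    have hk := key m hm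
    rw [if_neg hne] at hk
    exact (mul_eq_zero.mp hk).resolve_left (hmult_ne m)
  have lin : LinearIndependent ℝ
      (fun S : Finset (Fin d) => (fun i => ∏ j ∈ S, w i j : Fin n → ℝ)) := by
    rw [Fintype.linearIndependent_iff]
    intro g hg
    have hgpt : ∀ i : Fin n, (∑ S : Finset (Fin d), g S * ∏ j ∈ S, w i j) = 0 := by
      intro i
      have h := congrFun hg i
      simpa [Finset.sum_apply] using h
    have main : ∀ S : Finset (Fin d), (∀ S', S.card < S'.card → g S' = 0) → g S = 0 := by
      intro S hS
      have expand : ∀ S' : Finset (Fin d), μ (chi Sᶜ + chi S')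
          = ∑ i, v i * ((∏ j ∈ Sᶜ, w i j) * ∏ j ∈ S', w i j) := by
        intro S'
        refine Finset.sum_congr rfl fun i _ => ?_
        congr 1
        rw [← prod_pow_chi (w i) Sᶜ, ← prod_pow_chi (w i) S', ← Finset.prod_mul_distrib]
        exact Finset.prod_congr rfl fun j _ => by rw [Finsupp.add_apply, pow_add]
      have hzero_sum : (∑ S' : Finset (Fin d), g S' * μ (chi Sᶜ + chi S')) = 0 := by
        calc (∑ S' : Finset (Fin d), g S' * μ (chi Sᶜ + chi S'))
            = ∑ S' : Finset (Fin d), ∑ i,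
                (v i * ∏ j ∈ Sᶜ, w i j) * (g S' * ∏ j ∈ S', w i j) := by
              refine Finset.sum_congr rfl fun S' _ => ?_
              rw [expand S', Finset.mul_sum]
              exact Finset.sum_congr rfl fun i _ => by ring
          _ = ∑ i, ∑ S' : Finset (Fin d),
                (v i * ∏ j ∈ Sᶜ, w i j) * (g S' * ∏ j ∈ S', w i j) := Finset.sum_comm
          _ = 0 := by
              refine Finset.sum_eq_zero fun i _ => ?_
              rw [← Finset.mul_sum, hgpt i, mul_zero]
      have collapse : (∑ S' : Finset (Fin d), g S' * μ (chi Sᶜ + chi S'))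
          = g S * μ ones := by
        rw [hones, ← chi_compl_add_chi_self S]
        refine Finset.sum_eq_single_of_mem S (Finset.mem_univ S) ?_
        intro S' _ hne
        rcases le_or_gt S'.card S.card with hle | hlt
        · have hsum : (∑ j, (chi Sᶜ + chi S') j) ≤ d := by
            have he : (∑ j, (chi Sᶜ + chi S') j) = Sᶜ.card + S'.card := by
              simp only [Finsupp.add_apply]
              rw [Finset.sum_add_distrib, sum_chi, sum_chi]
            have h1 : Sᶜ.card = d - S.card := by
              rw [Finset.card_compl, Fintype.card_fin]
            have h2 : S.card ≤ d := by simpa using Finset.card_le_univ S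
            omega
          have hμ0 := hzero _ hsum
          rw [hones] at hμ0
          rw [hμ0 (Ne.symm (chi_compl_add_chi_ne S S' hne)), mul_zero]
        · rw [hS S' hlt, zero_mul]
      rw [collapse] at hzero_sum
      exact (mul_eq_zero.mp hzero_sum).resolve_right hone_ne
    have all : ∀ t : ℕ, ∀ S : Finset (Fin d), d - S.card ≤ t → g S = 0 := by
      intro t
      induction t with
      | zero =>
        intro S hS
        refine main S fun S' h' => absurd h' ?_
        have h1 : S'.card ≤ d := by simpa using Finset.card_le_univ S'
        omega
      | succ t ih =>
        intro S hS
        refine main S fun S' h' => ih S' ?_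
        have h1 : S'.card ≤ d := by simpa using Finset.card_le_univ S'
        omega
    exact fun S => all d S (Nat.sub_le _ _)
  have hcard := lin.fintype_card_le_finrank
  rw [Module.finrank_fin_fun] at hcard
  simpa [Fintype.card_finset] using hcard
end
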